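/- Noether-type conservation law on time scales: Let T be a bounded time scale with σ ∇-differentiable on T_κ. Let L : ℝⁿ × ℝⁿ × T^κ → ℝ be continuous and C¹ in its first two variables, and let Φ : [−η, η] × ℝⁿ → ℝⁿ be C² with Φ(0,·) = id. Suppose u ∈ C¹Δ_rd(T) satisfies the differential Euler-Lagrange equation [∂L/∂v(u, u^Δ, ·)]^∇(t) = σ^∇(t) ∂L/∂x(u(t), u^Δ(t), t) for all t ∈ T^κ_κ, and suppose the map θ ↦ L(Φ(θ, u(t)), (Φ(θ, u(·)))^Δ(t), t) is constant in θ for every t ∈ T^κ_κ (invariance), with θ ↦ Φ(θ, u(·)) jointly regular enough that Δ-differentiation in t and differentiation in θ commute. Then there exists c ∈ ℝ such that ∂L/∂v(u(t), u^Δ(t), t) · ∂Φ/∂θ(0, u(σ(t))) = c for every t ∈ T^κ. -/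

import Mathlib

open Set Filter Topology RealInnerProductSpace

open Classical in
/-- Forward jump operator of a time scale `T`, with convention `inf ∅ = sSup T`. -/
noncomputable def tsSigma (T : Set ℝ) (t : ℝ) : ℝ :=
  if ({s | s ∈ T ∧ t < s}).Nonempty then sInf {s | s ∈ T ∧ t < s} else sSup T

open Classical in
/-- Backward jump operator of a time scale `T`, with convention `sup ∅ = sInf T`. -/
noncomputable def tsRho (T : Set ℝ) (t : ℝ) : ℝ :=
  if ({s | s ∈ T ∧ s < t}).Nonempty then sSup {s | s ∈ T ∧ s < t} else sInf T

/-- `u` is Δ-differentiable at `t` (w.r.t. the time scale `T`) with derivative `L`. -/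
def HasDeltaDerivAt {E : Type*} [NormedAddCommGroup E] [NormedSpace ℝ E]
    (T : Set ℝ) (u : ℝ → E) (t : ℝ) (L : E) : Prop :=
  Filter.Tendsto (fun s => (tsSigma T t - s)⁻¹ • (u (tsSigma T t) - u s))
    (nhdsWithin t (T \ {tsSigma T t})) (nhds L)

/-- `u` is ∇-differentiable at `t` (w.r.t. the time scale `T`) with derivative `L`. -/
def HasNablaDerivAt {E : Type*} [NormedAddCommGroup E] [NormedSpace ℝ E]
    (T : Set ℝ) (u : ℝ → E) (t : ℝ) (L : E) : Prop :=
  Filter.Tendsto (fun s => (s - tsRho T t)⁻¹ • (u s - u (tsRho T t)))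
    (nhdsWithin t (T \ {tsRho T t})) (nhds L)

/-- `T^κ = {t ∈ T : t ≤ ρ(max T)}`. -/
def Tup (T : Set ℝ) : Set ℝ := {t | t ∈ T ∧ t ≤ tsRho T (sSup T)}

/-- `T_κ = {t ∈ T : σ(min T) ≤ t}`. -/
def Tlow (T : Set ℝ) : Set ℝ := {t | t ∈ T ∧ tsSigma T (sInf T) ≤ t}

section Basics
variable {T : Set ℝ} (hne : T.Nonempty) (hbd : Bornology.IsBounded T) (hcl : IsClosed T)

include hne hbd hcl in
lemma tsSigma_mem (t : ℝ) : tsSigma T t ∈ T := by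
  rw [tsSigma]
  split_ifs with h
  · have : sInf {s | s ∈ T ∧ t < s} ∈ closure {s | s ∈ T ∧ t < s} :=
      csInf_mem_closure h (hbd.bddBelow.mono (fun x hx => hx.1))
    have h2 : closure {s | s ∈ T ∧ t < s} ⊆ T := by
      have : {s | s ∈ T ∧ t < s} ⊆ T := fun x hx => hx.1
      exact (closure_minimal this hcl)
    exact h2 this
  · exact hcl.csSup_mem hne hbd.bddAbove

include hne hbd hcl in
lemma tsRho_mem (t : ℝ) : tsRho T t ∈ T := by
  rw [tsRho]
  split_ifs with h
  · have : sSup {s | s ∈ T ∧ s < t} ∈ closure {s | s ∈ T ∧ s < t} :=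
      csSup_mem_closure h (hbd.bddAbove.mono (fun x hx => hx.1))
    exact (closure_minimal (fun x hx => hx.1) hcl) this
  · exact hcl.csInf_mem hne hbd.bddBelow

include hbd in
lemma tsSigma_ge {t : ℝ} (ht : t ∈ T) : t ≤ tsSigma T t := by
  rw [tsSigma]
  split_ifs with h
  · exact le_csInf h (fun b hb => hb.2.le)
  · exact le_csSup hbd.bddAbove ht

include hbd in
lemma tsRho_le {t : ℝ} (ht : t ∈ T) : tsRho T t ≤ t := by
  rw [tsRho]
  split_ifs with h
  · exact csSup_le h (fun b hb => hb.2.le)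
  · exact csInf_le hbd.bddBelow ht

include hbd in
lemma tsSigma_le {t s : ℝ} (hs : s ∈ T) (hts : t < s) : tsSigma T t ≤ s := by
  rw [tsSigma, if_pos ⟨s, hs, hts⟩]
  exact csInf_le (hbd.bddBelow.mono (fun x hx => hx.1)) ⟨hs, hts⟩

include hbd in
lemma tsRho_ge {t s : ℝ} (hs : s ∈ T) (hst : s < t) : s ≤ tsRho T t := by
  rw [tsRho, if_pos ⟨s, hs, hst⟩]
  exact le_csSup (hbd.bddAbove.mono (fun x hx => hx.1)) ⟨hs, hst⟩

include hbd in
lemma not_mem_Ioo_rho {t s : ℝ} (hs : s ∈ T) (h1 : tsRho T t < s) (h2 : s < t) : False :=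
  absurd (tsRho_ge hbd hs h2) (not_le.mpr h1)

include hbd in
lemma not_mem_Ioo_sigma {t s : ℝ} (hs : s ∈ T) (h1 : t < s) (h2 : s < tsSigma T t) : False :=
  absurd (tsSigma_le hbd hs h1) (not_le.mpr h2)

include hbd in
lemma tsSigma_tsRho {t : ℝ} (ht : t ∈ T) (h : tsRho T t < t) : tsSigma T (tsRho T t) = t := by
  apply le_antisymm (tsSigma_le hbd ht h)
  have hnn : ({s | s ∈ T ∧ tsRho T t < s}).Nonempty := ⟨t, ht, h⟩
  rw [tsSigma, if_pos hnn]
  apply le_csInf hnn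
  rintro b ⟨hb, hb2⟩
  by_contra hlt
  exact not_mem_Ioo_rho hbd hb hb2 (not_le.mp hlt)

end Basics

section Eval
variable {E : Type*} [NormedAddCommGroup E] [NormedSpace ℝ E]
variable {T : Set ℝ} {f : ℝ → E} {t : ℝ} {D : E}

lemma nabla_eval (h : HasNablaDerivAt T f t D) (ht : t ∈ T) (hne : tsRho T t ≠ t) :
    f t - f (tsRho T t) = (t - tsRho T t) • D := by
  have hmem : t ∈ T \ {tsRho T t} := ⟨ht, fun hc => hne (by simpa using hc.symm)⟩
  have h2 : Tendsto (fun s => (s - tsRho T t)⁻¹ • (f s - f (tsRho T t))) (pure t) (nhds D) :=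
    h.mono_left (pure_le_nhdsWithin hmem)
  have h3 : (t - tsRho T t)⁻¹ • (f t - f (tsRho T t)) = D :=
    tendsto_nhds_unique (tendsto_pure_nhds _ t) h2
  have hne' : t - tsRho T t ≠ 0 := sub_ne_zero.mpr (Ne.symm hne)
  rw [← h3, smul_smul, mul_inv_cancel₀ hne', one_smul]

lemma delta_eval (h : HasDeltaDerivAt T f t D) (ht : t ∈ T) (hne : tsSigma T t ≠ t) :
    f (tsSigma T t) - f t = (tsSigma T t - t) • D := by
  have hmem : t ∈ T \ {tsSigma T t} := ⟨ht, fun hc => hne (by simpa using hc.symm)⟩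
  have h2 : Tendsto (fun s => (tsSigma T t - s)⁻¹ • (f (tsSigma T t) - f s)) (pure t) (nhds D) :=
    h.mono_left (pure_le_nhdsWithin hmem)
  have h3 : (tsSigma T t - t)⁻¹ • (f (tsSigma T t) - f t) = D :=
    tendsto_nhds_unique (tendsto_pure_nhds _ t) h2
  have hne' : tsSigma T t - t ≠ 0 := sub_ne_zero.mpr hne
  rw [← h3, smul_smul, mul_inv_cancel₀ hne', one_smul]

end Eval

section Cont
variable {E : Type*} [NormedAddCommGroup E] [NormedSpace ℝ E]
variable {T : Set ℝ} (hbd : Bornology.IsBounded T) {f : ℝ → E} {t : ℝ} {D : E}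

include hbd in
lemma nabla_cont (ht : t ∈ T) (h : HasNablaDerivAt T f t D) :
    Tendsto f (nhdsWithin t (T \ {tsRho T t})) (nhds (f t)) := by
  set r := tsRho T t with hr
  have hrt : r ≤ t := tsRho_le hbd ht
  have key : Tendsto (fun s => f r + (s - r) • ((s - r)⁻¹ • (f s - f r)))
      (nhdsWithin t (T \ {r})) (nhds (f r + (t - r) • D)) := by
    apply Tendsto.add tendsto_const_nhds
    exact Tendsto.smul (by
      exact ((continuous_id.sub continuous_const).tendsto t).mono_left nhdsWithin_le_nhds) h
  have heq : ∀ s ∈ T \ {r}, f r + (s - r) • ((s - r)⁻¹ • (f s - f r)) = f s := by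
    intro s hs
    have hsr : s - r ≠ 0 := sub_ne_zero.mpr hs.2
    rw [smul_smul, mul_inv_cancel₀ hsr, one_smul]
    abel
  have key2 : Tendsto f (nhdsWithin t (T \ {r})) (nhds (f r + (t - r) • D)) := by
    apply key.congr'
    filter_upwards [self_mem_nhdsWithin] with s hs using heq s hs
  have hval : f r + (t - r) • D = f t := by
    rcases eq_or_lt_of_le hrt with heq1 | hlt
    · rw [heq1]; simp
    · have := nabla_eval h ht (ne_of_lt hlt)
      rw [← hr] at this
      rw [← this]; abel
  rwa [hval] at key2

end Cont

section NeBotL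
variable {T : Set ℝ} (hne : T.Nonempty) (hbd : Bornology.IsBounded T) (hcl : IsClosed T)

include hne hbd hcl in
lemma sigma_neBot (hab : sInf T < sSup T) {t : ℝ} (ht : t ∈ T)
    (ht2 : t ≤ tsRho T (sSup T)) : (nhdsWithin t (T \ {tsSigma T t})).NeBot := by
  rw [← mem_closure_iff_nhdsWithin_neBot]
  by_cases hst : tsSigma T t = t
  · by_cases hnn : ({s | s ∈ T ∧ t < s}).Nonempty
    · have h1 : sInf {s | s ∈ T ∧ t < s} ∈ closure {s | s ∈ T ∧ t < s} :=
        csInf_mem_closure hnn (hbd.bddBelow.mono (fun x hx => hx.1))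
      have h2 : tsSigma T t = sInf {s | s ∈ T ∧ t < s} := by rw [tsSigma, if_pos hnn]
      have h3 : {s | s ∈ T ∧ t < s} ⊆ T \ {tsSigma T t} := by
        rintro s ⟨hs1, hs2⟩
        exact ⟨hs1, by simp [hst]; exact (ne_of_gt hs2)⟩
      rw [← h2, hst] at h1
      exact closure_mono h3 h1
    · have h2 : tsSigma T t = sSup T := by rw [tsSigma, if_neg hnn]
      have htop : t = sSup T := by rw [← h2, hst]
      have hrt : tsRho T t ≤ t := tsRho_le hbd ht
      have hrt2 : tsRho T t = t := le_antisymm hrt (htop ▸ ht2)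
      by_cases hnn2 : ({s | s ∈ T ∧ s < t}).Nonempty
      · have h1 : sSup {s | s ∈ T ∧ s < t} ∈ closure {s | s ∈ T ∧ s < t} :=
          csSup_mem_closure hnn2 (hbd.bddAbove.mono (fun x hx => hx.1))
        have h4 : tsRho T t = sSup {s | s ∈ T ∧ s < t} := by rw [tsRho, if_pos hnn2]
        have h3 : {s | s ∈ T ∧ s < t} ⊆ T \ {tsSigma T t} := by
          rintro s ⟨hs1, hs2⟩
          exact ⟨hs1, by simp [hst]; exact (ne_of_lt hs2)⟩
        rw [← h4, hrt2] at h1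
        exact closure_mono h3 h1
      · exfalso
        have : tsRho T t = sInf T := by rw [tsRho, if_neg hnn2]
        rw [this] at hrt2
        rw [hrt2, ← htop] at hab
        exact lt_irrefl _ hab
  · exact subset_closure ⟨ht, by simp [Ne.symm hst]⟩

end NeBotL

section Constancy
variable {T : Set ℝ} (hne : T.Nonempty) (hbd : Bornology.IsBounded T) (hcl : IsClosed T)

include hne hbd hcl in
lemma nabla_constant {f : ℝ → ℝ} {y : ℝ} (hy : y ∈ T)
    (hd : ∀ t ∈ T, tsSigma T (sInf T) ≤ t → t ≤ y → HasNablaDerivAt T f t 0) :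
    f y = f (sInf T) := by
  set a := sInf T with ha_def
  have ha : a ∈ T := hcl.csInf_mem hne hbd.bddBelow
  have hay : a ≤ y := csInf_le hbd.bddBelow hy
  have main : ∀ ε : ℝ, 0 < ε → |f y - f a| ≤ ε * (y - a) := by
    intro ε hε
    set S : Set ℝ := {s | s ∈ T ∧ a ≤ s ∧ s ≤ y ∧ |f y - f s| ≤ ε * (y - s)} with hS_def
    have hyS : y ∈ S := ⟨hy, hay, le_refl _, by simp⟩
    have hSne : S.Nonempty := ⟨y, hyS⟩
    have hSbdd : BddBelow S := ⟨a, fun s hs => hs.2.1⟩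
    set m := sInf S with hm_def
    have hma : a ≤ m := le_csInf hSne (fun s hs => hs.2.1)
    have hmy : m ≤ y := csInf_le hSbdd hyS
    have hmT : m ∈ T := by
      have h1 : m ∈ closure S := csInf_mem_closure hSne hSbdd
      exact (closure_minimal (fun s hs => hs.1) hcl) h1
    have hmS : m ∈ S := by
      by_contra hmem
      -- first: σ a ≤ m
      have hσa : tsSigma T a ≤ m := by
        rcases eq_or_lt_of_le hma with heq | hlt
        · -- m = a; if σ a > a, derive a ∈ S directly, contradiction
          by_cases hσ : tsSigma T a = a
          · rw [hσ, heq]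
          · exfalso
            have hσgt : a < tsSigma T a := lt_of_le_of_ne (tsSigma_ge hbd ha) (Ne.symm hσ)
            have : m < tsSigma T a := by rw [← heq]; exact hσgt
            obtain ⟨s, hsS, hs2⟩ := exists_lt_of_csInf_lt hSne this
            have hsa : s = a := by
              rcases eq_or_lt_of_le hsS.2.1 with h' | h'
              · exact h'.symm
              · exact absurd (tsSigma_le hbd hsS.1 h') (not_le.mpr hs2)
            rw [hsa] at hsS
            have : m ≤ a := csInf_le hSbdd hsS
            have hma' : m = a := le_antisymm this hma
            exact hmem (hma' ▸ hsS)
        · exact tsSigma_le hbd hmT hlt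
      have hder := hd m hmT hσa hmy
      have hcont := nabla_cont hbd hmT hder
      -- S ⊆ T \ {ρ m}
      have hsub : S ⊆ T \ {tsRho T m} := by
        intro s hs
        refine ⟨hs.1, ?_⟩
        simp only [mem_singleton_iff]
        intro hcontra
        have h1 : m ≤ s := csInf_le hSbdd hs
        have h2 : tsRho T m ≤ m := tsRho_le hbd hmT
        have : s = m := le_antisymm (hcontra ▸ h2) h1
        exact hmem (this ▸ hs)
      have hNB : (nhdsWithin m S).NeBot := by
        rw [← mem_closure_iff_nhdsWithin_neBot]
        exact csInf_mem_closure hSne hSbdd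
      have hcont' : Tendsto f (nhdsWithin m S) (nhds (f m)) :=
        hcont.mono_left (nhdsWithin_mono _ hsub)
      -- pass the inequality to the limit
      have hineq : (0:ℝ) ≤ ε * (y - m) - |f y - f m| := by
        have h1 : Tendsto (fun s => ε * (y - s) - |f y - f s|) (nhdsWithin m S)
            (nhds (ε * (y - m) - |f y - f m|)) := by
          apply Tendsto.sub
          · exact (tendsto_const_nhds.mul (tendsto_const_nhds.sub
              (tendsto_id.mono_left nhdsWithin_le_nhds)))
          · exact ((tendsto_const_nhds.sub hcont').abs)
        apply ge_of_tendsto h1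
        filter_upwards [self_mem_nhdsWithin] with s hs
        linarith [hs.2.2.2]
      exact hmem ⟨hmT, hma, hmy, by linarith⟩
    -- now show m = a
    rcases eq_or_lt_of_le hma with heq | hlt
    · have h := hmS.2.2.2
      rw [← heq] at h
      exact h
    · exfalso
      have hσa : tsSigma T a ≤ m := tsSigma_le hbd hmT hlt
      have hder := hd m hmT hσa hmy
      have hrm : tsRho T m ≤ m := tsRho_le hbd hmT
      rcases eq_or_lt_of_le hrm with hreq | hrlt
      · -- left-dense: find s < m in S
        have hnn2 : ({s | s ∈ T ∧ s < m}).Nonempty := ⟨a, ha, hlt⟩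
        have h4 : tsRho T m = sSup {s | s ∈ T ∧ s < m} := by rw [tsRho, if_pos hnn2]
        have hcls : m ∈ closure {s | s ∈ T ∧ s < m} := by
          have h1 := csSup_mem_closure hnn2 (hbd.bddAbove.mono (fun x hx => hx.1))
          rw [← h4, hreq] at h1
          exact h1
        have hNB : (nhdsWithin m {s | s ∈ T ∧ s < m}).NeBot :=
          mem_closure_iff_nhdsWithin_neBot.mp hcls
        have hsub : {s | s ∈ T ∧ s < m} ⊆ T \ {tsRho T m} := by
          rintro s ⟨hs1, hs2⟩
          refine ⟨hs1, ?_⟩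
          simp only [mem_singleton_iff, hreq]
          exact ne_of_lt hs2
        have hq : Tendsto (fun s => (s - tsRho T m)⁻¹ • (f s - f (tsRho T m)))
            (nhdsWithin m {s | s ∈ T ∧ s < m}) (nhds 0) :=
          hder.mono_left (nhdsWithin_mono _ hsub)
        have hq' : Tendsto (fun s => (s - m)⁻¹ • (f s - f m))
            (nhdsWithin m {s | s ∈ T ∧ s < m}) (nhds 0) := by
          simpa only [hreq] using hq
        have hev : ∀ᶠ s in nhdsWithin m {s | s ∈ T ∧ s < m},
            |(s - m)⁻¹ • (f s - f m)| < ε := by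
          have h6 := Metric.tendsto_nhds.mp hq' ε hε
          filter_upwards [h6] with s hs
          rw [Real.dist_eq, sub_zero] at hs
          exact hs
        obtain ⟨s, hslt, hsT, hsm⟩ := (hev.and self_mem_nhdsWithin).exists
        have hsne : s - m ≠ 0 := sub_ne_zero.mpr (ne_of_lt hsm)
        have h5 : f s - f m = (s - m) * ((s - m)⁻¹ * (f s - f m)) := by
          field_simp
        have hss : |f s - f m| ≤ ε * (m - s) := by
          calc |f s - f m| = |s - m| * |(s - m)⁻¹ • (f s - f m)| := by
                rw [smul_eq_mul, ← abs_mul, ← h5]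
            _ ≤ |s - m| * ε := mul_le_mul_of_nonneg_left (le_of_lt hslt) (abs_nonneg _)
            _ = ε * (m - s) := by rw [abs_of_neg (by linarith : s - m < 0)]; ring
        have hsS : s ∈ S := by
          refine ⟨hsT, csInf_le hbd.bddBelow hsT, le_trans (le_of_lt hsm) hmy, ?_⟩
          calc |f y - f s| ≤ |f y - f m| + |f m - f s| := by
                have he : f y - f s = (f y - f m) + (f m - f s) := by ring
                rw [he]; exact abs_add_le _ _
            _ ≤ ε * (y - m) + ε * (m - s) := by
                refine add_le_add hmS.2.2.2 ?_
                rw [abs_sub_comm]; exact hss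
            _ = ε * (y - s) := by ring
        have : m ≤ s := csInf_le hSbdd hsS
        exact absurd hsm (not_lt.mpr this)
      · -- left-scattered: f (ρ m) = f m, ρ m ∈ S
        have heval := nabla_eval hder hmT (ne_of_lt hrlt)
        rw [smul_zero] at heval
        have hfr : f (tsRho T m) = f m := by linarith [sub_eq_zero.mp heval]
        have hrS : tsRho T m ∈ S := by
          refine ⟨tsRho_mem hne hbd hcl m, csInf_le hbd.bddBelow (tsRho_mem hne hbd hcl m),
            le_trans hrm hmy, ?_⟩
          rw [hfr]
          calc |f y - f m| ≤ ε * (y - m) := hmS.2.2.2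
            _ ≤ ε * (y - tsRho T m) := by nlinarith
        have : m ≤ tsRho T m := csInf_le hSbdd hrS
        exact absurd hrlt (not_lt.mpr this)
  -- conclude
  have h2 : (0:ℝ) ≤ y - a := by linarith
  have habs : |f y - f a| ≤ 0 := by
    by_contra hpos
    push_neg at hpos
    have hden : (0:ℝ) < 2 * (y - a) + 1 := by linarith
    have h1 := main (|f y - f a| / (2 * (y - a) + 1)) (div_pos hpos hden)
    rw [div_mul_eq_mul_div, le_div_iff₀ hden] at h1
    nlinarith [mul_nonneg (le_of_lt hpos) h2]
  have h3 := abs_nonpos_iff.mp habs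
  linarith

lemma inv_smul_sub_symm {E : Type*} [NormedAddCommGroup E] [NormedSpace ℝ E]
    (a b : ℝ) (x y : E) : (a - b)⁻¹ • (x - y) = (b - a)⁻¹ • (y - x) := by
  rw [← neg_sub b a, ← neg_sub y x, inv_neg, neg_smul, smul_neg, neg_neg]


/-- Noether-type theorem on time scales: assume `σ` is ∇-differentiable on `T_κ`
(with derivative `sd`), `L` is continuous and C¹ in its two first variables with partial
gradients `Lx`, `Lv`, `Φ` is a C² one-parameter family of transformations with `Φ(0,·) = id`
and `∂Φ/∂θ = Φθ`, `u` is Δ-differentiable on `T^κ` (with derivative `uΔ` and rd-continuous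
Δ-derivative), `u` solves the `∇∘Δ`-differential Euler–Lagrange equation on `T^κ_κ`, the
Lagrangian is invariant under `Φ` along `u` (where `ΦuΔ θ` is the Δ-derivative of
`Φ(θ, u(·))` and Δ-differentiation in `t` commutes with differentiation in `θ` at `θ = 0`,
`ΨΔ` being the Δ-derivative of `Φθ(0, u(·))`). Then there exists `c ∈ ℝ` with
`∂L/∂v(u(t), u^Δ(t), t) ⬝ ∂Φ/∂θ(0, u(σ(t))) = c` for every `t ∈ T^κ`. -/
theorem stmt_18 (T : Set ℝ) (hne : T.Nonempty) (hbd : Bornology.IsBounded T) (hcl : IsClosed T)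
    (hcard : ∃ x ∈ T, ∃ y ∈ T, ∃ z ∈ T, x ≠ y ∧ x ≠ z ∧ y ≠ z)
    (n : ℕ)
    (L : EuclideanSpace ℝ (Fin n) → EuclideanSpace ℝ (Fin n) → ℝ → ℝ)
    (Lx Lv : EuclideanSpace ℝ (Fin n) → EuclideanSpace ℝ (Fin n) → ℝ → EuclideanSpace ℝ (Fin n))
    (hLsmooth : ∀ t : ℝ, ContDiff ℝ 1 (fun p : EuclideanSpace ℝ (Fin n) × EuclideanSpace ℝ (Fin n) => L p.1 p.2 t))
    (hLx : ∀ x v t, HasGradientAt (fun y => L y v t) (Lx x v t) x)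
    (hLv : ∀ x v t, HasGradientAt (fun w => L x w t) (Lv x v t) v)
    (η : ℝ) (hη : 0 < η)
    (Φ : ℝ → EuclideanSpace ℝ (Fin n) → EuclideanSpace ℝ (Fin n))
    (Φθ : ℝ → EuclideanSpace ℝ (Fin n) → EuclideanSpace ℝ (Fin n))
    (hΦsmooth : ContDiff ℝ 2 (fun p : ℝ × EuclideanSpace ℝ (Fin n) => Φ p.1 p.2))
    (hΦ0 : ∀ x, Φ 0 x = x)
    (hΦθ : ∀ θ x, HasDerivAt (fun θ' => Φ θ' x) (Φθ θ x) θ)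
    (sd : ℝ → ℝ) (hσ : ∀ t ∈ Tlow T, HasNablaDerivAt T (tsSigma T) t (sd t))
    (u : ℝ → EuclideanSpace ℝ (Fin n)) (uΔ : ℝ → EuclideanSpace ℝ (Fin n))
    (hu : ∀ t ∈ Tup T, HasDeltaDerivAt T u t (uΔ t))
    (huΔrd : ∀ t ∈ Tup T, tsSigma T t = t → ContinuousWithinAt uΔ T t)
    (huΔld : ∀ t ∈ Tup T, tsRho T t = t →
      ∃ l : EuclideanSpace ℝ (Fin n), Filter.Tendsto uΔ (nhdsWithin t (T ∩ Set.Iio t)) (nhds l))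
    -- Euler--Lagrange equation (EL^{∇∘Δ}_diff)
    (hEL : ∀ t ∈ Tup T ∩ Tlow T,
      HasNablaDerivAt T (fun s => Lv (u s) (uΔ s) s) t (sd t • Lx (u t) (uΔ t) t))
    -- Δ-derivative of θ ↦ Φ(θ, u(·)) in the t-variable
    (ΦuΔ : ℝ → ℝ → EuclideanSpace ℝ (Fin n))
    (hΦuΔ : ∀ θ ∈ Set.Icc (-η) η, ∀ t ∈ Tup T,
      HasDeltaDerivAt T (fun s => Φ θ (u s)) t (ΦuΔ θ t))
    -- invariance of the Lagrangian under the action of Φ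
    (hinv : ∀ t ∈ Tup T ∩ Tlow T, ∀ θ ∈ Set.Icc (-η) η,
      L (Φ θ (u t)) (ΦuΔ θ t) t = L (u t) (uΔ t) t)
    -- commutation of Δ-differentiation in t and differentiation in θ at θ = 0
    (ΨΔ : ℝ → EuclideanSpace ℝ (Fin n))
    (hΨΔ : ∀ t ∈ Tup T, HasDeltaDerivAt T (fun s => Φθ 0 (u s)) t (ΨΔ t))
    (hcomm : ∀ t ∈ Tup T ∩ Tlow T, HasDerivAt (fun θ => ΦuΔ θ t) (ΨΔ t) 0) :
    ∃ c : ℝ, ∀ t ∈ Tup T, ⟪Lv (u t) (uΔ t) t, Φθ 0 (u (tsSigma T t))⟫ = c := by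
  classical
  have hab : sInf T < sSup T := by
    obtain ⟨x, hx, y, hy, z, hz, hxy, hxz, hyz⟩ := hcard
    rcases lt_or_gt_of_ne hxy with h | h
    · exact lt_of_le_of_lt (csInf_le hbd.bddBelow hx) (lt_of_lt_of_le h (le_csSup hbd.bddAbove hy))
    · exact lt_of_le_of_lt (csInf_le hbd.bddBelow hy) (lt_of_lt_of_le h (le_csSup hbd.bddAbove hx))
  have h0mem : (0:ℝ) ∈ Set.Icc (-η) η := ⟨by linarith, hη.le⟩
  -- Part A
  have partA : ∀ t ∈ Tup T ∩ Tlow T,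
      ⟪Lx (u t) (uΔ t) t, Φθ 0 (u t)⟫ + ⟪Lv (u t) (uΔ t) t, ΨΔ t⟫ = 0 := by
    intro t ht
    have hNB : (nhdsWithin t (T \ {tsSigma T t})).NeBot :=
      sigma_neBot hne hbd hcl hab ht.1.1 ht.1.2
    have huniq : ΦuΔ 0 t = uΔ t := by
      have h1 := hΦuΔ 0 h0mem t ht.1
      have h2 : (fun s => Φ 0 (u s)) = u := funext (fun s => hΦ0 (u s))
      rw [h2] at h1
      exact tendsto_nhds_unique h1 (hu t ht.1)
    have hdiff : DifferentiableAt ℝ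
        (fun p : EuclideanSpace ℝ (Fin n) × EuclideanSpace ℝ (Fin n) => L p.1 p.2 t)
        (u t, uΔ t) :=
      ((hLsmooth t).differentiable one_ne_zero).differentiableAt
    set f' := fderiv ℝ
      (fun p : EuclideanSpace ℝ (Fin n) × EuclideanSpace ℝ (Fin n) => L p.1 p.2 t)
      (u t, uΔ t) with hf'_def
    have hf' : HasFDerivAt
        (fun p : EuclideanSpace ℝ (Fin n) × EuclideanSpace ℝ (Fin n) => L p.1 p.2 t)
        f' (u t, uΔ t) := hdiff.hasFDerivAt
    have hcurve : HasDerivAt (fun θ => (Φ θ (u t), ΦuΔ θ t)) (Φθ 0 (u t), ΨΔ t) 0 :=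
      (hΦθ 0 (u t)).prodMk (hcomm t ht)
    have hc0 : ((Φ (0:ℝ) (u t) : EuclideanSpace ℝ (Fin n)), ΦuΔ 0 t) = (u t, uΔ t) := by
      rw [hΦ0, huniq]
    have hf'' : HasFDerivAt
        (fun p : EuclideanSpace ℝ (Fin n) × EuclideanSpace ℝ (Fin n) => L p.1 p.2 t)
        f' (Φ (0:ℝ) (u t), ΦuΔ 0 t) := hc0 ▸ hf'
    have hcomp : HasDerivAt (fun θ => L (Φ θ (u t)) (ΦuΔ θ t) t) (f' (Φθ 0 (u t), ΨΔ t)) 0 :=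
      by have := hf''.comp_hasDerivAt 0 hcurve; exact this
    have hev : (fun θ => L (Φ θ (u t)) (ΦuΔ θ t) t) =ᶠ[nhds 0] fun _ => L (u t) (uΔ t) t := by
      filter_upwards [Icc_mem_nhds (by linarith : -η < 0) hη] with θ hθ
      exact hinv t ht θ hθ
    have hconst : HasDerivAt (fun θ => L (Φ θ (u t)) (ΦuΔ θ t) t) 0 0 :=
      (hasDerivAt_const (0:ℝ) (L (u t) (uΔ t) t)).congr_of_eventuallyEq hev
    have hD0 : f' (Φθ 0 (u t), ΨΔ t) = 0 := hcomp.unique hconst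
    have hinclL : HasFDerivAt (fun y : EuclideanSpace ℝ (Fin n) => (y, uΔ t))
        (ContinuousLinearMap.inl ℝ (EuclideanSpace ℝ (Fin n)) (EuclideanSpace ℝ (Fin n)))
        (u t) := hasFDerivAt_prodMk_left _ _
    have hinclR : HasFDerivAt (fun z : EuclideanSpace ℝ (Fin n) => ((u t), z))
        (ContinuousLinearMap.inr ℝ (EuclideanSpace ℝ (Fin n)) (EuclideanSpace ℝ (Fin n)))
        (uΔ t) := hasFDerivAt_prodMk_right _ _
    have hcompL : HasFDerivAt (fun y : EuclideanSpace ℝ (Fin n) => L y (uΔ t) t)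
        (f'.comp (ContinuousLinearMap.inl ℝ _ _)) (u t) :=
      by have := HasFDerivAt.comp (u t) hf' hinclL; exact this
    have hcompR : HasFDerivAt (fun z : EuclideanSpace ℝ (Fin n) => L (u t) z t)
        (f'.comp (ContinuousLinearMap.inr ℝ _ _)) (uΔ t) :=
      by have := HasFDerivAt.comp (uΔ t) hf' hinclR; exact this
    have heqL : (InnerProductSpace.toDual ℝ (EuclideanSpace ℝ (Fin n)) (Lx (u t) (uΔ t) t)
          : EuclideanSpace ℝ (Fin n) →L[ℝ] ℝ)
        = f'.comp (ContinuousLinearMap.inl ℝ _ _) :=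
      ((hLx (u t) (uΔ t) t).hasFDerivAt).unique hcompL
    have heqR : (InnerProductSpace.toDual ℝ (EuclideanSpace ℝ (Fin n)) (Lv (u t) (uΔ t) t)
          : EuclideanSpace ℝ (Fin n) →L[ℝ] ℝ)
        = f'.comp (ContinuousLinearMap.inr ℝ _ _) :=
      ((hLv (u t) (uΔ t) t).hasFDerivAt).unique hcompR
    have hsplit : f' (Φθ 0 (u t), ΨΔ t)
        = f' ((Φθ 0 (u t) : EuclideanSpace ℝ (Fin n)), (0 : EuclideanSpace ℝ (Fin n)))
          + f' ((0 : EuclideanSpace ℝ (Fin n)), ΨΔ t) := by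
      rw [← map_add]
      congr 1
      simp
    have hL1 : f' ((Φθ 0 (u t) : EuclideanSpace ℝ (Fin n)), (0 : EuclideanSpace ℝ (Fin n)))
        = ⟪Lx (u t) (uΔ t) t, Φθ 0 (u t)⟫ := by
      have h3 := congrFun (congrArg DFunLike.coe heqL) (Φθ 0 (u t))
      simp only [InnerProductSpace.toDual_apply_apply, ContinuousLinearMap.coe_comp',
        Function.comp_apply, ContinuousLinearMap.inl_apply] at h3
      rw [← h3]
    have hL2 : f' ((0 : EuclideanSpace ℝ (Fin n)), ΨΔ t)
        = ⟪Lv (u t) (uΔ t) t, ΨΔ t⟫ := by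
      have h3 := congrFun (congrArg DFunLike.coe heqR) (ΨΔ t)
      simp only [InnerProductSpace.toDual_apply_apply, ContinuousLinearMap.coe_comp',
        Function.comp_apply, ContinuousLinearMap.inr_apply] at h3
      rw [← h3]
    rw [hsplit, hL1, hL2] at hD0
    exact hD0
  -- abbreviations
  set v : ℝ → EuclideanSpace ℝ (Fin n) := fun s => Lv (u s) (uΔ s) s with hv_def
  set w : ℝ → EuclideanSpace ℝ (Fin n) := fun s => Φθ 0 (u s) with hw_def
  set g : ℝ → ℝ := fun s => ⟪v s, w (tsSigma T s)⟫ with hg_def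
  -- Part B : Leibniz + EL + invariance give vanishing nabla derivative of g
  have partB : ∀ t ∈ Tup T ∩ Tlow T, HasNablaDerivAt T g t 0 := by
    intro t ht
    have htT : t ∈ T := ht.1.1
    have hv : HasNablaDerivAt T v t (sd t • Lx (u t) (uΔ t) t) := hEL t ht
    have hw : HasDeltaDerivAt T w t (ΨΔ t) := hΨΔ t ht.1
    have hsg : HasNablaDerivAt T (tsSigma T) t (sd t) := hσ t ht.2
    have pA := partA t ht
    have hrt : tsRho T t ≤ t := tsRho_le hbd htT
    have htst : t ≤ tsSigma T t := tsSigma_ge hbd htT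
    have hvcont : Tendsto v (nhdsWithin t (T \ {tsRho T t})) (nhds (v t)) :=
      nabla_cont hbd htT hv
    -- the general algebraic decomposition of the quotient
    have hdecomp : ∀ s : ℝ,
        (s - tsRho T t)⁻¹ • (g s - g (tsRho T t))
        = ⟪(s - tsRho T t)⁻¹ • (v s - v (tsRho T t)), w (tsSigma T (tsRho T t))⟫
          + ⟪v s, (s - tsRho T t)⁻¹ • (w (tsSigma T s) - w (tsSigma T (tsRho T t)))⟫ := by
      intro s
      rw [real_inner_smul_left, real_inner_smul_right]
      rw [hg_def]
      simp only [inner_sub_left, inner_sub_right]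
      rw [smul_eq_mul]
      ring
    -- goal restated
    rw [HasNablaDerivAt]
    have hgoal_eq : ∀ s : ℝ, (s - tsRho T t)⁻¹ • (g s - g (tsRho T t))
        = (s - tsRho T t)⁻¹ * (g s - g (tsRho T t)) := fun s => rfl
    rcases eq_or_lt_of_le hrt with hreq | hrlt
    · -- t left-dense
      have hstt : tsSigma T t = t := by
        by_contra hne'
        have hstgt : t < tsSigma T t := lt_of_le_of_ne htst (Ne.symm hne')
        -- t is left-dense and right-scattered: contradiction with differentiability of σ
        have hnn2 : ({s | s ∈ T ∧ s < t}).Nonempty := by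
          by_contra hemp
          rw [Set.not_nonempty_iff_eq_empty] at hemp
          have h4 : tsRho T t = sInf T := by
            rw [tsRho, if_neg (by rw [hemp]; exact Set.not_nonempty_empty)]
          have h5 : t = sInf T := by rw [← h4, hreq]
          have h6 := ht.2.2
          rw [← h5] at h6
          exact absurd (lt_of_lt_of_le hstgt h6) (lt_irrefl t)
        have h4 : tsRho T t = sSup {s | s ∈ T ∧ s < t} := by rw [tsRho, if_pos hnn2]
        have hcls : t ∈ closure {s | s ∈ T ∧ s < t} := by
          have h5 := csSup_mem_closure hnn2 (hbd.bddAbove.mono (fun x hx => hx.1))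
          rw [← h4, hreq] at h5
          exact h5
        have hNB2 : (nhdsWithin t {s | s ∈ T ∧ s < t}).NeBot :=
          mem_closure_iff_nhdsWithin_neBot.mp hcls
        have hsub : {s | s ∈ T ∧ s < t} ⊆ T \ {tsRho T t} := by
          rintro s ⟨hs1, hs2⟩
          refine ⟨hs1, ?_⟩
          simp only [mem_singleton_iff, hreq]
          exact ne_of_lt hs2
        have hq := hsg.mono_left (nhdsWithin_mono _ hsub)
        have hev1 : ∀ᶠ s in nhdsWithin t {s | s ∈ T ∧ s < t},
            |(s - tsRho T t)⁻¹ • (tsSigma T s - tsSigma T (tsRho T t)) - sd t| < 1 := by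
          have h6 := Metric.tendsto_nhds.mp hq 1 one_pos
          filter_upwards [h6] with s hs
          rw [Real.dist_eq] at hs
          exact hs
        have hev2 : ∀ᶠ s in nhdsWithin t {s | s ∈ T ∧ s < t},
            |s - t| < (tsSigma T t - t) / (|sd t| + 1) := by
          have h6 : {x : ℝ | |x - t| < (tsSigma T t - t) / (|sd t| + 1)} ∈ nhds t := by
            have : (0:ℝ) < (tsSigma T t - t) / (|sd t| + 1) := by
              apply div_pos (by linarith) (by positivity)
            exact Metric.ball_mem_nhds t this
          exact mem_nhdsWithin_of_mem_nhds h6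
        obtain ⟨s, ⟨hs1, hs2⟩, hsT, hslt⟩ := ((hev1.and hev2).and self_mem_nhdsWithin).exists
        have hσs_le : tsSigma T s ≤ t := tsSigma_le hbd htT hslt
        have hpos : 0 < t - s := by linarith
        rw [hreq] at hs1
        have hQval : (s - t)⁻¹ • (tsSigma T s - tsSigma T t)
            = (tsSigma T t - tsSigma T s) / (t - s) := by
          rw [smul_eq_mul, div_eq_mul_inv, show s - t = -(t-s) from by ring, inv_neg]
          ring
        rw [hQval] at hs1
        obtain ⟨hlo, hhi⟩ := abs_lt.mp hs1
        have hM : (0:ℝ) < |sd t| + 1 := by positivity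
        have hQle : (tsSigma T t - tsSigma T s)/(t-s) ≤ |sd t| + 1 := by
          have := le_abs_self (sd t); linarith
        rw [div_le_iff₀ hpos] at hQle
        have hts : t - s ≤ |s - t| := by rw [abs_sub_comm]; exact le_abs_self _
        have h10 : (t - s) * (|sd t| + 1) < tsSigma T t - t :=
          (lt_div_iff₀ hM).mp (lt_of_le_of_lt hts hs2)
        nlinarith
      -- now t is left-dense and right-dense
      rw [hreq]
      have hsg' : Tendsto (fun s => (s - t)⁻¹ • (tsSigma T s - t)) (nhdsWithin t (T \ {t}))
          (nhds (sd t)) := by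
        have h1 := hsg
        rw [HasNablaDerivAt, hreq, hstt] at h1
        exact h1
      have hσmem : ∀ s ∈ T \ {t}, tsSigma T s ∈ T \ {t} := by
        rintro s ⟨hsT, hsne⟩
        refine ⟨tsSigma_mem hne hbd hcl s, ?_⟩
        simp only [mem_singleton_iff] at hsne ⊢
        rcases lt_or_gt_of_ne hsne with hlt | hgt
        · intro hcon
          have hρles : tsRho T t ≤ s := by
            have hnn : ({s' | s' ∈ T ∧ s' < t}).Nonempty := ⟨s, hsT, hlt⟩
            rw [tsRho, if_pos hnn]
            apply csSup_le hnn
            rintro b ⟨hbT, hbt⟩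
            by_contra hbs
            push_neg at hbs
            have := tsSigma_le hbd hbT hbs
            rw [hcon] at this
            exact absurd hbt (not_lt.mpr this)
          rw [hreq] at hρles
          exact absurd hlt (not_lt.mpr hρles)
        · intro hcon
          have := tsSigma_ge hbd hsT
          rw [hcon] at this
          exact absurd hgt (not_lt.mpr this)
      have hσtend : Tendsto (tsSigma T) (nhdsWithin t (T \ {t})) (nhds t) := by
        have hdiff0 : Tendsto (fun s => tsSigma T s - t) (nhdsWithin t (T \ {t})) (nhds 0) := by
          have hmul : Tendsto (fun s => (s - t) * ((s - t)⁻¹ • (tsSigma T s - t)))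
              (nhdsWithin t (T \ {t})) (nhds (0 * sd t)) := by
            apply Tendsto.mul _ hsg'
            have : Tendsto (fun s : ℝ => s - t) (nhds t) (nhds (t - t)) :=
              (continuous_id.sub continuous_const).tendsto t
            rw [sub_self] at this
            exact this.mono_left nhdsWithin_le_nhds
          rw [zero_mul] at hmul
          apply hmul.congr'
          filter_upwards [self_mem_nhdsWithin] with s hs
          have hsne : s - t ≠ 0 := sub_ne_zero.mpr hs.2
          rw [smul_eq_mul, ← mul_assoc, mul_inv_cancel₀ hsne, one_mul]
        have := hdiff0.add (tendsto_const_nhds (x := t))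
        simpa using this
      have hσtendW : Tendsto (tsSigma T) (nhdsWithin t (T \ {t})) (nhdsWithin t (T \ {t})) := by
        rw [tendsto_nhdsWithin_iff]
        refine ⟨hσtend, ?_⟩
        filter_upwards [self_mem_nhdsWithin] with s hs using hσmem s hs
      have hw2 : Tendsto (fun r' => (r' - t)⁻¹ • (w r' - w t)) (nhdsWithin t (T \ {t}))
          (nhds (ΨΔ t)) := by
        have h1 := hw
        rw [HasDeltaDerivAt, hstt] at h1
        apply h1.congr
        intro s'
        exact inv_smul_sub_symm t s' (w t) (w s')
      have hQ : Tendsto (fun s => (tsSigma T s - t)⁻¹ • (w (tsSigma T s) - w t))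
          (nhdsWithin t (T \ {t})) (nhds (ΨΔ t)) := hw2.comp hσtendW
      have hA : Tendsto (fun s => (s - t)⁻¹ • (w (tsSigma T s) - w t))
          (nhdsWithin t (T \ {t})) (nhds (sd t • ΨΔ t)) := by
        have hmul := hsg'.smul hQ
        apply hmul.congr'
        filter_upwards [self_mem_nhdsWithin] with s hs
        have hσne : tsSigma T s - t ≠ 0 := sub_ne_zero.mpr (hσmem s hs).2
        rw [smul_eq_mul, smul_smul, mul_assoc, mul_inv_cancel₀ hσne, mul_one]
      -- combine
      have hv' : Tendsto (fun s => (s - t)⁻¹ • (v s - v t)) (nhdsWithin t (T \ {t}))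
          (nhds (sd t • Lx (u t) (uΔ t) t)) := by
        have h1 := hv
        rw [HasNablaDerivAt, hreq] at h1
        exact h1
      have hvcont' : Tendsto v (nhdsWithin t (T \ {t})) (nhds (v t)) := by
        have h1 := hvcont
        rw [hreq] at h1
        exact h1
      have htotal : Tendsto
          (fun s => ⟪(s - t)⁻¹ • (v s - v t), w t⟫
            + ⟪v s, (s - t)⁻¹ • (w (tsSigma T s) - w t)⟫)
          (nhdsWithin t (T \ {t}))
          (nhds (⟪sd t • Lx (u t) (uΔ t) t, w t⟫ + ⟪v t, sd t • ΨΔ t⟫)) :=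
        (hv'.inner tendsto_const_nhds).add (hvcont'.inner hA)
      have hzero : ⟪sd t • Lx (u t) (uΔ t) t, w t⟫ + ⟪(v t : EuclideanSpace ℝ (Fin n)), sd t • ΨΔ t⟫ = 0 := by
        rw [real_inner_smul_left, real_inner_smul_right, ← mul_add]
        have hpa : ⟪Lx (u t) (uΔ t) t, w t⟫ + ⟪(v t : EuclideanSpace ℝ (Fin n)), ΨΔ t⟫ = 0 := pA
        rw [hpa, mul_zero]
      rw [hzero] at htotal
      apply htotal.congr
      intro s
      have h1 := hdecomp s
      rw [hreq, hstt] at h1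
      rw [← h1]
    · -- t left-scattered
      have hσr : tsSigma T (tsRho T t) = t := tsSigma_tsRho hbd htT hrlt
      have hrne : tsRho T t ≠ t := ne_of_lt hrlt
      have hwin : ∀ᶠ s in nhdsWithin t (T \ {tsRho T t}), s ∈ Ioo (tsRho T t) (2*t - tsRho T t) := by
        have hIoo : Ioo (tsRho T t) (2*t - tsRho T t) ∈ nhds t := Ioo_mem_nhds hrlt (by linarith)
        filter_upwards [nhdsWithin_le_nhds hIoo] with s hs using hs
      have hge : ∀ᶠ s in nhdsWithin t (T \ {tsRho T t}), t ≤ s := by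
        filter_upwards [self_mem_nhdsWithin, hwin] with s hs hsw
        by_contra hlt
        push_neg at hlt
        have := tsRho_ge hbd hs.1 hlt
        have h2 := hsw.1
        linarith
      have hEσ := nabla_eval hsg htT hrne
      rw [hσr, smul_eq_mul] at hEσ
      -- hEσ : tsSigma T t - t = (t - tsRho T t) * sd t
      rcases eq_or_lt_of_le htst with hstt | hstgt
      · -- right-dense : σ t = t, sd t = 0
        have hsd0 : sd t = 0 := by
          have h1 : t - tsRho T t ≠ 0 := sub_ne_zero.mpr (Ne.symm hrne)
          have h2 : (t - tsRho T t) * sd t = 0 := by rw [← hEσ, ← hstt]; ring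
          exact (mul_eq_zero.mp h2).resolve_left h1
        have hq_σ : Tendsto (fun s => (s - tsRho T t)⁻¹ • (tsSigma T s - t))
            (nhdsWithin t (T \ {tsRho T t})) (nhds (sd t)) := by
          have h1 := hsg
          rw [HasNablaDerivAt, hσr] at h1
          exact h1
        -- split the filter
        have hunion : (T \ {tsRho T t}) = ((T \ {tsRho T t}) ∩ Ioi t) ∪ ((T \ {tsRho T t}) ∩ Iic t) := by
          ext x
          constructor
          · intro hx
            rcases le_or_gt x t with h | h
            · exact Or.inr ⟨hx, h⟩
            · exact Or.inl ⟨hx, h⟩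
          · rintro (hx | hx) <;> exact hx.1
        have hA : Tendsto (fun s => (s - tsRho T t)⁻¹ • (w (tsSigma T s) - w t))
            (nhdsWithin t (T \ {tsRho T t})) (nhds 0) := by
          rw [hunion, nhdsWithin_union, tendsto_sup]
          constructor
          · -- on the right part
            have hmono : nhdsWithin t ((T \ {tsRho T t}) ∩ Ioi t) ≤ nhdsWithin t (T \ {tsRho T t}) :=
              nhdsWithin_mono _ (inter_subset_left)
            have hq_σ1 := hq_σ.mono_left hmono
            have hσtend1 : Tendsto (tsSigma T) (nhdsWithin t ((T \ {tsRho T t}) ∩ Ioi t))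
                (nhds t) := by
              have hdiff0 : Tendsto (fun s => tsSigma T s - t)
                  (nhdsWithin t ((T \ {tsRho T t}) ∩ Ioi t)) (nhds 0) := by
                have hmul : Tendsto (fun s => (s - tsRho T t) * ((s - tsRho T t)⁻¹ • (tsSigma T s - t)))
                    (nhdsWithin t ((T \ {tsRho T t}) ∩ Ioi t)) (nhds ((t - tsRho T t) * sd t)) := by
                  apply Tendsto.mul _ hq_σ1
                  exact ((continuous_id.sub continuous_const).tendsto t).mono_left nhdsWithin_le_nhds
                rw [hsd0, mul_zero] at hmul
                apply hmul.congr'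
                filter_upwards [self_mem_nhdsWithin] with s hs
                have hsne : s - tsRho T t ≠ 0 := sub_ne_zero.mpr hs.1.2
                rw [smul_eq_mul, ← mul_assoc, mul_inv_cancel₀ hsne, one_mul]
              have := hdiff0.add (tendsto_const_nhds (x := t))
              simpa using this
            have hσtendW1 : Tendsto (tsSigma T) (nhdsWithin t ((T \ {tsRho T t}) ∩ Ioi t))
                (nhdsWithin t (T \ {t})) := by
              rw [tendsto_nhdsWithin_iff]
              refine ⟨hσtend1, ?_⟩
              filter_upwards [self_mem_nhdsWithin] with s hs
              refine ⟨tsSigma_mem hne hbd hcl s, ?_⟩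
              simp only [mem_singleton_iff]
              have h2 : t < s := hs.2
              have h3 := tsSigma_ge hbd hs.1.1
              exact ne_of_gt (lt_of_lt_of_le h2 h3)
            have hw2 : Tendsto (fun r' => (r' - t)⁻¹ • (w r' - w t)) (nhdsWithin t (T \ {t}))
                (nhds (ΨΔ t)) := by
              have h1 := hw
              rw [HasDeltaDerivAt, ← hstt] at h1
              apply h1.congr
              intro s'
              exact inv_smul_sub_symm t s' (w t) (w s')
            have hQ1 := hw2.comp hσtendW1
            have hmul := hq_σ1.smul hQ1
            rw [hsd0, zero_smul] at hmul
            apply hmul.congr'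
            filter_upwards [self_mem_nhdsWithin] with s hs
            have hσne : tsSigma T s - t ≠ 0 := by
              have h2 : t < s := hs.2
              have h3 := tsSigma_ge hbd hs.1.1
              exact sub_ne_zero.mpr (ne_of_gt (lt_of_lt_of_le h2 h3))
            simp only [Function.comp_apply]
            rw [smul_eq_mul, smul_smul, mul_assoc, mul_inv_cancel₀ hσne, mul_one]
          · -- on the left part : eventually s = t
            have hmono : nhdsWithin t ((T \ {tsRho T t}) ∩ Iic t) ≤ nhdsWithin t (T \ {tsRho T t}) :=
              nhdsWithin_mono _ (inter_subset_left)
            have hge2 := hge.filter_mono hmono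
            apply Tendsto.congr' _ (tendsto_const_nhds (x := (0 : EuclideanSpace ℝ (Fin n))))
            filter_upwards [self_mem_nhdsWithin, hge2] with s hs hts
            have hst' : s = t := le_antisymm hs.2 hts
            rw [hst', ← hstt]
            simp
        have htotal : Tendsto
            (fun s => ⟪(s - tsRho T t)⁻¹ • (v s - v (tsRho T t)), w t⟫
              + ⟪v s, (s - tsRho T t)⁻¹ • (w (tsSigma T s) - w t)⟫)
            (nhdsWithin t (T \ {tsRho T t}))
            (nhds (⟪sd t • Lx (u t) (uΔ t) t, w t⟫ + ⟪(v t : EuclideanSpace ℝ (Fin n)), 0⟫)) :=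
          (hv.inner tendsto_const_nhds).add (hvcont.inner hA)
        have hzero : ⟪sd t • Lx (u t) (uΔ t) t, w t⟫ + ⟪(v t : EuclideanSpace ℝ (Fin n)), (0 : EuclideanSpace ℝ (Fin n))⟫ = 0 := by
          rw [hsd0, zero_smul, inner_zero_left, inner_zero_right, add_zero]
        rw [hzero] at htotal
        apply htotal.congr
        intro s
        have h1 := hdecomp s
        rw [hσr] at h1
        rw [← h1]
      · -- t isolated : eventually s = t, quotient constant 0
        have hstne : tsSigma T t ≠ t := ne_of_gt hstgt
        have hwin2 : ∀ᶠ s in nhdsWithin t (T \ {tsRho T t}), s ∈ Ioo (tsRho T t) (tsSigma T t) := by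
          have hIoo : Ioo (tsRho T t) (tsSigma T t) ∈ nhds t := Ioo_mem_nhds hrlt hstgt
          filter_upwards [nhdsWithin_le_nhds hIoo] with s hs using hs
        have hseq : ∀ᶠ s in nhdsWithin t (T \ {tsRho T t}), s = t := by
          filter_upwards [self_mem_nhdsWithin, hwin2] with s hs hsw
          rcases lt_trichotomy s t with h | h | h
          · exfalso
            have := tsRho_ge hbd hs.1 h
            have h2 := hsw.1
            exact absurd this (not_le.mpr h2)
          · exact h
          · exfalso
            have := tsSigma_le hbd hs.1 h
            have h2 := hsw.2
            exact absurd this (not_le.mpr h2)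
        have hEv := nabla_eval hv htT hrne
        have hEw := delta_eval hw htT hstne
        have hpa : ⟪Lx (u t) (uΔ t) t, w t⟫ + ⟪(v t : EuclideanSpace ℝ (Fin n)), ΨΔ t⟫ = 0 := pA
        have hg0 : g t - g (tsRho T t) = 0 := by
          have e1 : g t - g (tsRho T t)
              = ⟪v t - v (tsRho T t), w t⟫ + ⟪v t, w (tsSigma T t) - w t⟫ := by
            simp only [hg_def]
            rw [hσr]
            simp only [inner_sub_left, inner_sub_right]
            ring
          rw [hEv, hEw, real_inner_smul_left, real_inner_smul_right, real_inner_smul_left] at e1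
          rw [e1, hEσ]
          linear_combination ((t - tsRho T t) * sd t) * hpa
        apply Tendsto.congr' _ (tendsto_const_nhds (x := (0:ℝ)))
        filter_upwards [hseq] with s hs
        rw [hs, hg0, smul_zero]

  -- conclusion via constancy
  refine ⟨g (sInf T), ?_⟩
  intro t ht
  exact nabla_constant hne hbd hcl ht.1
    (fun s hsT hσa hsy => partB s ⟨⟨hsT, le_trans hsy ht.2⟩, ⟨hsT, hσa⟩⟩)
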